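/- arXiv:1206.5046 — 3 statements merged into one kernel-verified Lean document; each statement's English description precedes it below -/
import Mathlib

section
/- For generalized Laguerre polynomials with parameter α > -1 and integers m ≥ 1, n ≥ 1 with m ≠ n, the integral a_{m,n}^{(α)}(x) := ∫₀ˣ L_m^{(α)}(y) L_n^{(α)}(y) e^{-y} y^α dy equals (e^{-x} x^{α+1} / (m-n)) · (L_n^{(α)}(x) L_{m-1}^{(α+1)}(x) − L_m^{(α)}(x) L_{n-1}^{(α+1)}(x)). -/
open MeasureTheory intervalIntegral

noncomputable def laguerre (α : ℝ) (n : ℕ) (x : ℝ) : ℝ :=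
  ∑ k ∈ Finset.range (n + 1),
    (-1 : ℝ) ^ k * Real.Gamma (α + n + 1) /
      (Real.Gamma (α + k + 1) * (Nat.factorial (n - k)) * (Nat.factorial k)) * x ^ k

noncomputable def MD (α : ℝ) (m : ℕ) (y : ℝ) : ℝ :=
  if m ≤ 1 then 0 else -(laguerre (α+2) (m-2) y)

noncomputable def lcoef (α : ℝ) (n k : ℕ) : ℝ :=
  if k ≤ n then (-1 : ℝ) ^ k * Real.Gamma (α + n + 1) /
      (Real.Gamma (α + k + 1) * (Nat.factorial (n - k)) * (Nat.factorial k)) else 0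

lemma laguerre_eq_sum (α : ℝ) (n N : ℕ) (hN : n < N) (x : ℝ) :
    laguerre α n x = ∑ k ∈ Finset.range N, lcoef α n k * x ^ k := by
  rw [laguerre]
  rw [show (∑ k ∈ Finset.range (n+1),
    (-1 : ℝ) ^ k * Real.Gamma (α + n + 1) /
      (Real.Gamma (α + k + 1) * (Nat.factorial (n - k)) * (Nat.factorial k)) * x ^ k)
      = ∑ k ∈ Finset.range (n+1), lcoef α n k * x ^ k from
    Finset.sum_congr rfl fun k hk => by
      rw [lcoef, if_pos (Nat.lt_succ_iff.mp (Finset.mem_range.mp hk))]]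
  exact Finset.sum_subset (Finset.range_subset_range.mpr hN)
    (fun k _ hk => by
      rw [lcoef, if_neg (by simpa using fun h => hk (Finset.mem_range.mpr (Nat.lt_succ_of_le h)))]
      ring)

lemma laguerre_continuous (α : ℝ) (n : ℕ) : Continuous (fun y => laguerre α n y) := by
  unfold laguerre
  exact continuous_finset_sum _ fun k _ => continuous_const.mul (continuous_pow k)

lemma gamma_ne (α : ℝ) (hα : -1 < α) (k : ℕ) : Real.Gamma (α + k + 1) ≠ 0 :=
  ne_of_gt (Real.Gamma_pos_of_pos (by have h := (Nat.cast_nonneg k : (0:ℝ) ≤ k); linarith))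

lemma laguerre_hasDerivAt (α : ℝ) (hα : -1 < α) (n : ℕ) (x : ℝ) :
    HasDerivAt (fun y => laguerre α (n+1) y) (-(laguerre (α+1) n x)) x := by
  have h : HasDerivAt (fun y => ∑ k ∈ Finset.range (n+2), lcoef α (n+1) k * y ^ k)
      (∑ k ∈ Finset.range (n+2), lcoef α (n+1) k * (k * x ^ (k-1))) x := by
    apply HasDerivAt.fun_sum
    intro k _
    exact (hasDerivAt_pow k x).const_mul (lcoef α (n+1) k)
  have hfun : (fun y => laguerre α (n+1) y) =
      (fun y => ∑ k ∈ Finset.range (n+2), lcoef α (n+1) k * y ^ k) := by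
    funext y; exact laguerre_eq_sum α (n+1) (n+2) (by omega) y
  rw [hfun]
  convert h using 1
  rw [Finset.sum_range_succ']
  simp only [Nat.cast_zero, pow_zero, Nat.zero_sub, mul_one, zero_mul, mul_zero, add_zero]
  rw [laguerre_eq_sum (α+1) n (n+1) (by omega), ← Finset.sum_neg_distrib]
  apply Finset.sum_congr rfl
  intro k hk
  replace hk : k ≤ n := Nat.lt_succ_iff.mp (Finset.mem_range.mp hk)
  have e1 : lcoef α (n+1) (k+1) * (k+1) = -(lcoef (α+1) n k) := by
    rw [lcoef, lcoef, if_pos (by omega), if_pos hk]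
    have h1 : α + ↑(n+1) + 1 = (α+1) + ↑n + 1 := by push_cast; ring
    have h2 : α + ↑(k+1) + 1 = (α+1) + ↑k + 1 := by push_cast; ring
    have h3 : (n+1) - (k+1) = n - k := by omega
    rw [h1, h2, h3]
    have h4 : (Nat.factorial (k+1) : ℝ) = (k+1) * Nat.factorial k := by
      rw [Nat.factorial_succ]; push_cast; ring
    rw [h4, pow_succ]
    have hG := gamma_ne (α+1) (by linarith) k
    have hf1 : (Nat.factorial (n-k) : ℝ) ≠ 0 := by positivity
    have hf2 : (Nat.factorial k : ℝ) ≠ 0 := by positivity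
    field_simp
  simp only [Nat.add_sub_cancel]
  push_cast at e1 ⊢; linear_combination (-(x ^ k)) * e1

lemma shift_sum (f : ℕ → ℝ) (N : ℕ) (x : ℝ) :
    x * ∑ k ∈ Finset.range N, f k * x ^ k
      = ∑ k ∈ Finset.range (N+1), (if k = 0 then 0 else f (k-1)) * x ^ k := by
  rw [Finset.sum_range_succ', Finset.mul_sum]
  simp only [Nat.add_sub_cancel, if_neg (Nat.succ_ne_zero _), ite_true, zero_mul, add_zero]
  apply Finset.sum_congr rfl
  intro k _; ring

lemma keyC (α : ℝ) (hα : -1 < α) (j : ℕ) (x : ℝ) :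
    (α + 1 - x) * laguerre (α+1) (j+1) x - x * laguerre (α+2) j x
      = (j+2 : ℝ) * laguerre α (j+2) x := by
  have hA := laguerre_eq_sum (α+1) (j+1) (j+3) (by omega) x
  have hB := laguerre_eq_sum (α+2) j (j+3) (by omega) x
  have hE := laguerre_eq_sum α (j+2) (j+3) (by omega) x
  rw [hA, hB, hE, sub_mul, shift_sum, shift_sum]
  -- extend the non-shifted sums to range (j+4)
  have ext : ∀ (g : ℕ → ℝ), g (j+3) = 0 →
      ∑ k ∈ Finset.range (j+3), g k * x ^ k = ∑ k ∈ Finset.range (j+4), g k * x ^ k := by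
    intro g hg
    have h := Finset.sum_range_succ (fun k => g k * x ^ k) (j+3)
    rw [show j+3+1 = j+4 from rfl] at h
    rw [h, hg, zero_mul, add_zero]
  rw [ext (lcoef (α+1) (j+1)) (by rw [lcoef, if_neg (by omega)]),
      ext (lcoef α (j+2)) (by rw [lcoef, if_neg (by omega)])]
  rw [Finset.mul_sum, Finset.mul_sum, ← Finset.sum_sub_distrib, ← Finset.sum_sub_distrib]
  apply Finset.sum_congr rfl
  intro k hk
  replace hk : k < j + 4 := Finset.mem_range.mp hk
  have key : (α+1) * lcoef (α+1) (j+1) k - (if k = 0 then 0 else lcoef (α+1) (j+1) (k-1))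
      - (if k = 0 then 0 else lcoef (α+2) j (k-1)) = (j+2 : ℝ) * lcoef α (j+2) k := by
    match k, hk with
    | 0, _ =>
      simp only [ite_true, sub_zero]
      rw [lcoef, lcoef, if_pos (by omega : 0 ≤ j+1), if_pos (by omega : 0 ≤ j+2)]
      have h1 : (α+1) + (0:ℕ) + 1 = (α+1)+1 := by push_cast; ring
      have h2 : α + (0:ℕ) + 1 = α+1 := by push_cast; ring
      have h3 : (α+1) + ((j+1 : ℕ):ℝ) + 1 = α + j + 3 := by push_cast; ring
      have h4 : α + ((j+2 : ℕ):ℝ) + 1 = α + j + 3 := by push_cast; ring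
      rw [h1, h2, h3, h4]
      have hg1 : Real.Gamma ((α+1)+1) = (α+1) * Real.Gamma (α+1) := by
        rw [Real.Gamma_add_one (by linarith)]
      rw [hg1]
      simp only [Nat.sub_zero, pow_zero]
      have hG : Real.Gamma (α+1) ≠ 0 := by
        have := gamma_ne α hα 0; simpa using this
      have hf1 : (Nat.factorial (j+1) : ℝ) ≠ 0 := by positivity
      have hf2 : (Nat.factorial (j+2) : ℝ) = (j+2) * Nat.factorial (j+1) := by
        rw [Nat.factorial_succ]; push_cast; ring
      rw [hf2]
      have hα1 : α + 1 ≠ 0 := by linarith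
      field_simp
    | (i+1), hk =>
      simp only [if_neg (Nat.succ_ne_zero i), Nat.add_sub_cancel]
      rcases le_or_gt i j with hij | hij
      · obtain ⟨d, hd⟩ : ∃ d, j = i + d := ⟨j - i, by omega⟩
        subst hd
        rw [lcoef, lcoef, lcoef, lcoef, if_pos (by omega), if_pos (by omega),
          if_pos (by omega), if_pos (by omega)]
        have h1 : (α+1) + ((i+d+1 : ℕ):ℝ) + 1 = α + (i:ℝ) + (d:ℝ) + 3 := by push_cast; ring
        have h2 : (α+2) + ((i+d : ℕ):ℝ) + 1 = α + (i:ℝ) + (d:ℝ) + 3 := by push_cast; ring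
        have h3 : α + ((i+d+2 : ℕ):ℝ) + 1 = α + (i:ℝ) + (d:ℝ) + 3 := by push_cast; ring
        have h4 : (α+1) + ((i+1 : ℕ):ℝ) + 1 = (α + (i:ℝ) + 2) + 1 := by push_cast; ring
        have h5 : (α+1) + ((i:ℕ):ℝ) + 1 = α + (i:ℝ) + 2 := by push_cast; ring
        have h6 : (α+2) + ((i:ℕ):ℝ) + 1 = (α + (i:ℝ) + 2) + 1 := by push_cast; ring
        have h7 : α + ((i+1 : ℕ):ℝ) + 1 = α + (i:ℝ) + 2 := by push_cast; ring
        rw [h1, h2, h3, h4, h5, h6, h7]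
        have hg : Real.Gamma ((α + (i:ℝ) + 2) + 1) = (α + (i:ℝ) + 2) * Real.Gamma (α + (i:ℝ) + 2) := by
          rw [Real.Gamma_add_one (by have := (Nat.cast_nonneg i : (0:ℝ) ≤ i); linarith)]
        rw [hg]
        have e1 : i + d + 1 - (i+1) = d := by omega
        have e2 : i + d + 1 - i = d + 1 := by omega
        have e3 : i + d - i = d := by omega
        have e4 : i + d + 2 - (i+1) = d + 1 := by omega
        rw [e1, e2, e3, e4]
        have hfd : (Nat.factorial (d+1) : ℝ) = (d+1) * Nat.factorial d := by
          rw [Nat.factorial_succ]; push_cast; ring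
        have hfi : (Nat.factorial (i+1) : ℝ) = (i+1) * Nat.factorial i := by
          rw [Nat.factorial_succ]; push_cast; ring
        rw [hfd, hfi, pow_succ]
        have hG2 : Real.Gamma (α + (i:ℝ) + 2) ≠ 0 := by
          have := gamma_ne α hα (i+1); push_cast at this
          convert this using 2; ring
        have hfd' : (Nat.factorial d : ℝ) ≠ 0 := by positivity
        have hfi' : (Nat.factorial i : ℝ) ≠ 0 := by positivity
        have hαi : α + (i:ℝ) + 2 ≠ 0 := by have := (Nat.cast_nonneg i : (0:ℝ) ≤ i); linarith
        have hd1 : ((d:ℝ) + 1) ≠ 0 := by positivity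
        have hi1 : ((i:ℝ) + 1) ≠ 0 := by positivity
        field_simp
        push_cast
        ring
      · rcases Nat.lt_or_ge i (j+2) with hij2 | hij2
        · -- i = j+1
          have hi : i = j + 1 := by omega
          subst hi
          rw [lcoef, lcoef, lcoef, lcoef, if_neg (by omega), if_pos (by omega),
            if_neg (by omega), if_pos (by omega)]
          have h1 : (α+1) + ((j+1 : ℕ):ℝ) + 1 = α + (j:ℝ) + 3 := by push_cast; ring
          have h2 : α + ((j+2 : ℕ):ℝ) + 1 = α + (j:ℝ) + 3 := by push_cast; ring
          rw [h1, h2]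
          have e1 : j + 1 - (j+1) = 0 := by omega
          have e2 : j + 2 - (j+1+1) = 0 := by omega
          rw [e1, e2]
          have hfi : (Nat.factorial (j+1+1) : ℝ) = (j+2) * Nat.factorial (j+1) := by
            rw [Nat.factorial_succ]; push_cast; ring
          rw [hfi, pow_succ, pow_succ]
          have hG : Real.Gamma (α + (j:ℝ) + 3) ≠ 0 := by
            have := gamma_ne α hα (j+2); push_cast at this
            convert this using 2; ring
          have hf : (Nat.factorial (j+1) : ℝ) ≠ 0 := by positivity
          have hj2 : ((j:ℝ) + 2) ≠ 0 := by positivity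
          simp only [Nat.factorial_zero, Nat.cast_one, mul_one]
          field_simp
          ring
        · -- i ≥ j+2 : everything 0
          rw [lcoef, lcoef, lcoef, lcoef, if_neg (by omega), if_neg (by omega),
            if_neg (by omega), if_neg (by omega)]
          ring
  calc (α+1) * (lcoef (α+1) (j+1) k * x ^ k)
        - (if k = 0 then 0 else lcoef (α+1) (j+1) (k-1)) * x ^ k
        - (if k = 0 then 0 else lcoef (α+2) j (k-1)) * x ^ k
      = ((α+1) * lcoef (α+1) (j+1) k - (if k = 0 then 0 else lcoef (α+1) (j+1) (k-1))
          - (if k = 0 then 0 else lcoef (α+2) j (k-1))) * x ^ k := by ring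
    _ = (j+2 : ℝ) * (lcoef α (j+2) k * x ^ k) := by rw [key]; ring

lemma laguerre_zero_eq (β : ℝ) (hβ : -1 < β) (x : ℝ) : laguerre β 0 x = 1 := by
  have hG : Real.Gamma (β + 1) ≠ 0 := by simpa using gamma_ne β hβ 0
  simp [laguerre, Finset.sum_range_one]
  field_simp
  exact hG

lemma laguerre_one_eq (α : ℝ) (hα : -1 < α) (x : ℝ) : laguerre α 1 x = α + 1 - x := by
  have hG : Real.Gamma (α + 1) ≠ 0 := by simpa using gamma_ne α hα 0
  have hg : Real.Gamma (α + 1 + 1) = (α + 1) * Real.Gamma (α + 1) :=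
    Real.Gamma_add_one (by linarith)
  rw [laguerre]
  rw [Finset.sum_range_succ, Finset.sum_range_one]
  norm_num
  rw [hg]
  have hα1 : α + 1 ≠ 0 := by linarith
  field_simp
  ring

lemma hasDerivAt_M (α : ℝ) (hα : -1 < α) (m : ℕ) (hm : 1 ≤ m) (y : ℝ) :
    HasDerivAt (fun t => laguerre (α+1) (m-1) t) (MD α m y) y := by
  rcases Nat.lt_or_ge m 2 with h2 | h2
  · have hm1 : m = 1 := by omega
    subst hm1
    have : (fun t => laguerre (α+1) 0 t) = fun _ => (1:ℝ) := by
      funext t; exact laguerre_zero_eq (α+1) (by linarith) t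
    rw [show (1:ℕ) - 1 = 0 from rfl, this, MD, if_pos (le_refl 1)]
    exact hasDerivAt_const y 1
  · have h3 : m - 1 = (m-2) + 1 := by omega
    rw [MD, if_neg (by omega), h3]
    have h := laguerre_hasDerivAt (α+1) (by linarith) (m-2) y
    rw [show (α+1)+1 = α+2 by ring] at h
    exact h

lemma identD (α : ℝ) (hα : -1 < α) (m : ℕ) (hm : 1 ≤ m) (y : ℝ) :
    (α + 1 - y) * laguerre (α+1) (m-1) y + y * MD α m y = (m : ℝ) * laguerre α m y := by
  rcases Nat.lt_or_ge m 2 with h2 | h2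
  · have hm1 : m = 1 := by omega
    subst hm1
    rw [MD, if_pos (le_refl 1), show (1:ℕ) - 1 = 0 from rfl,
      laguerre_zero_eq (α+1) (by linarith), laguerre_one_eq α hα]
    push_cast; ring
  · obtain ⟨j, hj⟩ : ∃ j, m = j + 2 := ⟨m - 2, by omega⟩
    subst hj
    rw [MD, if_neg (by omega)]
    have h := keyC α hα j y
    simp only [show j + 2 - 1 = j + 1 from rfl, show j + 2 - 2 = j from rfl]
    push_cast
    linear_combination h

theorem laguerre_offdiag_integral
    (α : ℝ) (hα : -1 < α) (m n : ℕ) (hm : 1 ≤ m) (hn : 1 ≤ n) (hmn : m ≠ n)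
    (x : ℝ) (hx : 0 < x) :
    (∫ y in (0 : ℝ)..x,
        laguerre α m y * laguerre α n y * Real.exp (-y) * y ^ α) =
      Real.exp (-x) * x ^ (α + 1) / ((m : ℝ) - n) *
        (laguerre α n x * laguerre (α + 1) (m - 1) x -
          laguerre α m x * laguerre (α + 1) (n - 1) x) := by
  have hmn' : (m : ℝ) - n ≠ 0 := sub_ne_zero.mpr (by exact_mod_cast hmn)
  set G : ℝ → ℝ := fun y => laguerre α n y * laguerre (α+1) (m-1) y -
      laguerre α m y * laguerre (α+1) (n-1) y with hGdef
  set F : ℝ → ℝ := fun y => Real.exp (-y) * y ^ (α+1) * G y / ((m:ℝ) - n) with hFdef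
  have hcG : Continuous G :=
    ((laguerre_continuous α n).mul (laguerre_continuous (α+1) (m-1))).sub
      ((laguerre_continuous α m).mul (laguerre_continuous (α+1) (n-1)))
  have hFderiv : ∀ y ∈ Set.Ioo (0:ℝ) x, HasDerivAt F
      (laguerre α m y * laguerre α n y * Real.exp (-y) * y ^ α) y := by
    intro y hy
    have hy0 : (0:ℝ) < y := hy.1
    have hLn : HasDerivAt (fun y => laguerre α n y) (-(laguerre (α+1) (n-1) y)) y := by
      have h := laguerre_hasDerivAt α hα (n-1) y
      rwa [show n - 1 + 1 = n by omega] at h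
    have hLm : HasDerivAt (fun y => laguerre α m y) (-(laguerre (α+1) (m-1) y)) y := by
      have h := laguerre_hasDerivAt α hα (m-1) y
      rwa [show m - 1 + 1 = m by omega] at h
    have hM := hasDerivAt_M α hα m hm y
    have hN := hasDerivAt_M α hα n hn y
    have hGd : HasDerivAt G
        ((-(laguerre (α+1) (n-1) y)) * laguerre (α+1) (m-1) y + laguerre α n y * MD α m y -
         ((-(laguerre (α+1) (m-1) y)) * laguerre (α+1) (n-1) y + laguerre α m y * MD α n y)) y :=
      (hLn.mul hM).sub (hLm.mul hN)
    have hexp : HasDerivAt (fun y : ℝ => Real.exp (-y)) (-Real.exp (-y)) y := by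
      simpa using (hasDerivAt_neg y).exp
    have hpow : HasDerivAt (fun y : ℝ => y ^ (α+1)) ((α+1) * y ^ α) y := by
      have h := Real.hasDerivAt_rpow_const (x := y) (p := α+1) (Or.inl hy0.ne')
      simpa [show α + 1 - 1 = α by ring] using h
    have hFd := ((hexp.mul hpow).mul hGd).div_const ((m:ℝ) - n)
    simp only [Pi.mul_apply] at hFd
    refine hFd.congr_deriv (Eq.symm ?_)
    rw [eq_div_iff hmn']
    have h1 := identD α hα m hm y
    have h2 := identD α hα n hn y
    have hry : y ^ (α+1) = y ^ α * y := Real.rpow_add_one hy0.ne' α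
    rw [hry]
    simp only [hGdef]
    linear_combination (Real.exp (-y) * y ^ α * laguerre α m y) * h2 -
      (Real.exp (-y) * y ^ α * laguerre α n y) * h1
  have hcont : ContinuousOn F (Set.Icc 0 x) := by
    apply ContinuousOn.div_const
    apply ContinuousOn.mul _ hcG.continuousOn
    apply ContinuousOn.mul (Real.continuous_exp.comp continuous_neg).continuousOn
    intro y _
    exact (Real.continuousAt_rpow_const y (α+1) (Or.inr (by linarith))).continuousWithinAt
  have hint : IntervalIntegrable
      (fun y => laguerre α m y * laguerre α n y * Real.exp (-y) * y ^ α) volume 0 x := by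
    have hr : IntervalIntegrable (fun y : ℝ => y ^ α) volume 0 x :=
      intervalIntegral.intervalIntegrable_rpow' hα
    exact hr.continuousOn_mul
      (((laguerre_continuous α m).mul (laguerre_continuous α n)).mul
        (Real.continuous_exp.comp continuous_neg)).continuousOn
  have hFTC := intervalIntegral.integral_eq_sub_of_hasDeriv_right_of_le hx.le hcont
    (fun y hy => (hFderiv y hy).hasDerivWithinAt) hint
  rw [hFTC]
  have hF0 : F 0 = 0 := by
    simp [hFdef, Real.zero_rpow (by linarith : α + 1 ≠ 0)]
  rw [hF0, sub_zero, hFdef]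
  ring
end

section
/- For generalized Laguerre polynomials with parameter α > -1 and n ≥ 1, the integral ∫₀ˣ L_n^{(α)}(y) e^{-y} y^α dy equals (1/n) e^{-x} x^{α+1} L_{n-1}^{(α+1)}(x). -/
open MeasureTheory intervalIntegral Finset

lemma gamma_pos (α : ℝ) (hα : -1 < α) (k : ℕ) : 0 < Real.Gamma (α + k + 1) :=
  Real.Gamma_pos_of_pos (by have : (0:ℝ) ≤ k := k.cast_nonneg; linarith)

lemma laguerre_key (α : ℝ) (hα : -1 < α) (m : ℕ) (y : ℝ) :
    ((m : ℝ) + 1) * laguerre α (m + 1) y =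
      ∑ k ∈ Finset.range (m + 1),
        ((-1 : ℝ) ^ k * Real.Gamma (α + 1 + m + 1) /
          (Real.Gamma (α + 1 + k + 1) * (Nat.factorial (m - k)) * (Nat.factorial k))) *
          ((α + 1 + k) * y ^ k - y ^ (k + 1)) := by
  have hfact : ∀ j : ℕ, ((j.factorial : ℝ)) ≠ 0 :=
    fun j => Nat.cast_ne_zero.mpr j.factorial_pos.ne'
  have hΓpos := gamma_pos α hα
  have hΓne : ∀ k : ℕ, Real.Gamma (α + k + 1) ≠ 0 := fun k => (hΓpos k).ne'
  have hne : ∀ k : ℕ, α + (k : ℝ) + 1 ≠ 0 := by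
    intro k; have : (0:ℝ) ≤ k := k.cast_nonneg; have : 0 < α + (k:ℝ) + 1 := by linarith
    exact this.ne'
  set A : ℕ → ℝ := fun k =>
    (-1 : ℝ) ^ k * Real.Gamma (α + (↑(m+1) : ℝ) + 1) /
      (Real.Gamma (α + k + 1) * ((m+1-k).factorial : ℝ) * (k.factorial : ℝ)) with hA
  set B : ℕ → ℝ := fun k =>
    (-1 : ℝ) ^ k * Real.Gamma (α + 1 + m + 1) /
      (Real.Gamma (α + 1 + k + 1) * ((m - k).factorial : ℝ) * (k.factorial : ℝ)) with hB
  have hL : laguerre α (m+1) y = ∑ k ∈ range (m+2), A k * y^k := rfl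
  have hRHS : ∑ k ∈ range (m+1), B k * ((α+1+k) * y^k - y^(k+1))
      = (∑ k ∈ range (m+1), B k * (α+1+k) * y^k) - ∑ k ∈ range (m+1), B k * y^(k+1) := by
    rw [← Finset.sum_sub_distrib]; exact Finset.sum_congr rfl fun k _ => by ring
  rw [hL, Finset.mul_sum, hRHS]
  rw [Finset.sum_range_succ' (fun k => ((m:ℝ)+1) * (A k * y^k)) (m+1)]
  rw [Finset.sum_range_succ (fun k => ((m:ℝ)+1) * (A (k+1) * y^(k+1))) m]
  rw [Finset.sum_range_succ' (fun k => B k * (α+1+k) * y^k) m]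
  rw [Finset.sum_range_succ (fun k => B k * y^(k+1)) m]
  have hg2 : ∀ k : ℕ, Real.Gamma (α + 1 + k + 1) = (α + k + 1) * Real.Gamma (α + k + 1) := by
    intro k
    rw [show α + 1 + (k:ℝ) + 1 = (α + k + 1) + 1 by ring, Real.Gamma_add_one (hne k)]
  have h0 : ((m:ℝ)+1) * (A 0 * y^0) = B 0 * (α+1+(0:ℕ)) * y^0 := by
    simp only [hA, hB, Nat.cast_zero, add_zero, pow_zero, Nat.sub_zero, Nat.factorial_zero,
      Nat.cast_one, mul_one, one_mul]
    rw [show (α + (↑(m+1):ℝ) + 1) = α + 1 + m + 1 by push_cast; ring]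
    rw [show α + 1 + 1 = (α+1)+1 by ring]
    rw [Real.Gamma_add_one (by intro h; linarith : α+1 ≠ 0)]
    rw [Nat.factorial_succ]
    have h1 : Real.Gamma (α+1) ≠ 0 := by simpa using hΓne 0
    have h2 := hfact m
    have h3 : α + 1 ≠ 0 := by intro h; linarith
    have h4 : ((m:ℝ)+1) ≠ 0 := by positivity
    push_cast
    field_simp
  have htop : ((m:ℝ)+1) * (A (m+1) * y^(m+1)) = - (B m * y^(m+1)) := by
    simp only [hA, hB]
    rw [show (α + (↑(m+1):ℝ) + 1) = α + 1 + m + 1 by push_cast; ring]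
    rw [show m + 1 - (m+1) = 0 by omega, show m - m = 0 by omega, Nat.factorial_succ,
      pow_succ]
    have h1 : Real.Gamma (α + 1 + m + 1) ≠ 0 := by
      have := gamma_pos (α+1) (by linarith) m; exact this.ne'
    have h2 := hfact m
    have h4 : ((m:ℝ)+1) ≠ 0 := by positivity
    push_cast
    field_simp
  have hmid : ∀ k ∈ range m, ((m:ℝ)+1) * (A (k+1) * y^(k+1))
      = B (k+1) * (α+1+(↑(k+1):ℝ)) * y^(k+1) - B k * y^(k+1) := by
    intro k hk
    obtain ⟨j, rfl⟩ := Nat.exists_eq_add_of_lt (Finset.mem_range.mp hk)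
    simp only [hA, hB]
    rw [show k + j + 1 + 1 - (k+1) = j+1 by omega, show k+j+1-(k+1) = j by omega,
      show k+j+1-k = j+1 by omega]
    have h8 : α + (k:ℝ) + 1 + 1 ≠ 0 := by
      have : (0:ℝ) ≤ k := k.cast_nonneg
      have : 0 < α + (k:ℝ) + 1 + 1 := by linarith
      exact this.ne'
    have e4 : Real.Gamma (α + 1 + (↑(k+1):ℝ) + 1)
        = (α+(k:ℝ)+1+1) * ((α+(k:ℝ)+1) * Real.Gamma (α+(k:ℝ)+1)) := by
      rw [show (α + 1 + (↑(k+1):ℝ) + 1) = ((α + (k:ℝ) + 1) + 1) + 1 by push_cast; ring,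
        Real.Gamma_add_one h8, Real.Gamma_add_one (hne k)]
    have e5 : Real.Gamma (α + (↑(k+1):ℝ) + 1) = (α+(k:ℝ)+1) * Real.Gamma (α+(k:ℝ)+1) := by
      rw [show (α + (↑(k+1):ℝ) + 1) = (α + (k:ℝ) + 1) + 1 by push_cast; ring,
        Real.Gamma_add_one (hne k)]
    rw [show (α + (↑(k+j+1+1):ℝ) + 1) = α + 1 + (↑(k+j+1):ℝ) + 1 by push_cast; ring]
    rw [e5, e4, hg2 k]
    rw [Nat.factorial_succ j, Nat.factorial_succ k, pow_succ]
    have h1 := hΓne k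
    have h2 := hfact j
    have h3 := hfact k
    have h5 := hne k
    have h6 : ((j:ℝ)+1) ≠ 0 := by positivity
    have h7 : ((k:ℝ)+1) ≠ 0 := by positivity
    push_cast
    field_simp
    ring
  rw [Finset.sum_congr rfl hmid, Finset.sum_sub_distrib]
  push_cast at h0 htop ⊢
  linarith [h0, htop]

theorem laguerre_integral_eq (α : ℝ) (hα : -1 < α) (n : ℕ) (hn : 1 ≤ n)
    (x : ℝ) (hx : 0 < x) :
    (∫ y in (0 : ℝ)..x, laguerre α n y * Real.exp (-y) * y ^ α) =
      (1 / (n : ℝ)) * Real.exp (-x) * x ^ (α + 1) * laguerre (α + 1) (n - 1) x := by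
  obtain ⟨m, rfl⟩ : ∃ m, n = m + 1 := ⟨n - 1, by omega⟩
  simp only [Nat.add_sub_cancel]
  have hm1 : ((m:ℝ)+1) ≠ 0 := by positivity
  set C : ℕ → ℝ := fun k =>
    (-1 : ℝ) ^ k * Real.Gamma (α + 1 + m + 1) /
      (Real.Gamma (α + 1 + k + 1) * ((m - k).factorial : ℝ) * (k.factorial : ℝ)) with hC
  set F : ℝ → ℝ := fun t =>
    (1 / ((m:ℝ)+1)) * Real.exp (-t) * t ^ (α+1) * laguerre (α+1) m t with hF
  set G : ℝ → ℝ := fun t =>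
    (1/((m:ℝ)+1)) * ∑ k ∈ Finset.range (m+1), C k * (Real.exp (-t) * t ^ (α+1+(k:ℝ))) with hG
  have hlag : ∀ t : ℝ, laguerre (α+1) m t = ∑ k ∈ Finset.range (m+1), C k * t^k := fun t => rfl
  have hFG : ∀ t : ℝ, 0 < t → F t = G t := by
    intro t ht
    simp only [hF, hG, hlag, Finset.mul_sum]
    refine Finset.sum_congr rfl fun k _ => ?_
    rw [Real.rpow_add ht (α+1) (k:ℝ), Real.rpow_natCast]
    ring
  have hGd : ∀ t : ℝ, 0 < t →
      HasDerivAt G (laguerre α (m+1) t * Real.exp (-t) * t^α) t := by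
    intro t ht
    have hterm : ∀ k ∈ Finset.range (m+1),
        HasDerivAt (fun s : ℝ => C k * (Real.exp (-s) * s ^ (α+1+(k:ℝ))))
          (C k * (Real.exp (-t) * ((α+1+(k:ℝ)) * t^(α+(k:ℝ)) - t^(α+1+(k:ℝ))))) t := by
      intro k _
      have hexp : HasDerivAt (fun s : ℝ => Real.exp (-s)) (-Real.exp (-t)) t := by
        simpa [Function.comp_def] using (Real.hasDerivAt_exp (-t)).comp t (hasDerivAt_neg t)
      have hpow : HasDerivAt (fun s : ℝ => s ^ (α+1+(k:ℝ)))
          ((α+1+(k:ℝ)) * t ^ (α+(k:ℝ))) t := by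
        have h := Real.hasDerivAt_rpow_const (x := t) (p := α+1+(k:ℝ)) (Or.inl ht.ne')
        rwa [show α+1+(k:ℝ)-1 = α+(k:ℝ) by ring] at h
      have h := (hexp.fun_mul hpow).const_mul (C k)
      refine h.congr_deriv ?_
      ring
    have hsum := HasDerivAt.fun_sum hterm
    have h := hsum.const_mul (1/((m:ℝ)+1))
    have hval : (1/((m:ℝ)+1)) * (∑ k ∈ Finset.range (m+1),
          C k * (Real.exp (-t) * ((α+1+(k:ℝ)) * t^(α+(k:ℝ)) - t^(α+1+(k:ℝ)))))
        = laguerre α (m+1) t * Real.exp (-t) * t^α := by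
      have hkey := laguerre_key α hα m t
      have hsum2 : ∑ k ∈ Finset.range (m+1),
            C k * (Real.exp (-t) * ((α+1+(k:ℝ)) * t^(α+(k:ℝ)) - t^(α+1+(k:ℝ))))
          = Real.exp (-t) * t^α * ∑ k ∈ Finset.range (m+1),
              C k * ((α+1+(k:ℝ)) * t^k - t^(k+1)) := by
        rw [Finset.mul_sum]
        refine Finset.sum_congr rfl fun k _ => ?_
        rw [show α+(k:ℝ) = α + (k:ℝ) by ring, Real.rpow_add ht α (k:ℝ),
          show α+1+(k:ℝ) = α + ((k:ℝ)+1) by ring, Real.rpow_add ht α ((k:ℝ)+1)]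
        rw [Real.rpow_natCast]
        rw [show t ^ ((k:ℝ)+1) = t ^ ((k+1 : ℕ) : ℝ) by push_cast; ring, Real.rpow_natCast]
        ring
      rw [hsum2, ← hkey]
      field_simp
    rw [hval] at h
    exact h
  have hFd : ∀ t ∈ Set.Ioo (0:ℝ) x,
      HasDerivAt F (laguerre α (m+1) t * Real.exp (-t) * t^α) t := by
    intro t ht
    refine (hGd t ht.1).congr_of_eventuallyEq ?_
    exact Filter.eventuallyEq_of_mem (isOpen_Ioi.mem_nhds ht.1) fun y hy => hFG y hy
  have hlagc : Continuous (fun t : ℝ => laguerre (α+1) m t) := by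
    unfold laguerre
    exact continuous_finset_sum _ fun i _ => continuous_const.mul (continuous_pow i)
  have hFc : ContinuousOn F (Set.Icc 0 x) := by
    apply continuousOn_of_forall_continuousAt
    intro t ht
    have h1 : ContinuousAt (fun t : ℝ => t ^ (α+1)) t :=
      Real.continuousAt_rpow_const t (α+1) (Or.inr (by linarith))
    exact ((continuousAt_const.mul
      ((Real.continuous_exp.comp continuous_neg).continuousAt)).mul h1).mul hlagc.continuousAt
  have hlagc2 : Continuous (fun t : ℝ => laguerre α (m+1) t) := by
    unfold laguerre
    exact continuous_finset_sum _ fun i _ => continuous_const.mul (continuous_pow i)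
  have hint : IntervalIntegrable (fun y => laguerre α (m+1) y * Real.exp (-y) * y ^ α)
      volume 0 x := by
    have h1 : IntervalIntegrable (fun y : ℝ => y ^ α) volume 0 x :=
      intervalIntegral.intervalIntegrable_rpow' hα
    have h2 : ContinuousOn (fun y : ℝ => laguerre α (m+1) y * Real.exp (-y))
        (Set.uIcc 0 x) := (hlagc2.mul (Real.continuous_exp.comp continuous_neg)).continuousOn
    simpa using h1.continuousOn_mul h2
  rw [intervalIntegral.integral_eq_sub_of_hasDerivAt_of_le hx.le hFc hFd hint]
  have hF0 : F 0 = 0 := by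
    simp [hF, Real.zero_rpow (show α+1 ≠ 0 by intro h; linarith)]
  rw [hF0, sub_zero, hF]
  push_cast
  ring
end

section
/- For Hermite polynomials H_m, H_n with m ≠ n, the integral a_{n,m}(x) := ∫_{-∞}^x e^{-y²} H_n(y) H_m(y) dy equals e^{-x²} (H_n(x) H_{m+1}(x) − H_m(x) H_{n+1}(x)) / (2(m−n)). -/
open MeasureTheory

/-- Physicists' Hermite polynomials: `H_0 = 1`, `H_1(x) = 2x`,
`H_{n+2}(x) = 2x H_{n+1}(x) - 2(n+1) H_n(x)`. -/
noncomputable def hermite : ℕ → ℝ → ℝ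
  | 0, _ => 1
  | 1, x => 2 * x
  | n + 2, x => 2 * x * hermite (n + 1) x - 2 * ((n : ℝ) + 1) * hermite n x

open Real Filter

/-- Formal derivative of `hermite`. -/
noncomputable def hermiteD : ℕ → ℝ → ℝ
  | 0, _ => 0
  | k + 1, x => 2 * ((k : ℝ) + 1) * hermite k x

lemma hermite_key (k : ℕ) (x : ℝ) :
    hermiteD k x = 2 * x * hermite k x - hermite (k + 1) x := by
  cases k with
  | zero => simp [hermiteD, hermite]
  | succ j =>
    rw [show j + 1 + 1 = j + 2 from rfl]
    simp only [hermiteD, hermite]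
    ring

lemma hermite_hasDerivAt : ∀ (k : ℕ) (x : ℝ), HasDerivAt (hermite k) (hermiteD k x) x := by
  intro k
  induction k using Nat.twoStepInduction with
  | zero =>
    intro x
    have : hermite 0 = fun _ : ℝ => (1 : ℝ) := by funext y; simp [hermite]
    rw [this]
    simpa [hermiteD] using hasDerivAt_const x (1 : ℝ)
  | one =>
    intro x
    have : hermite 1 = fun y : ℝ => 2 * y := by funext y; simp [hermite]
    rw [this]
    have h := (hasDerivAt_id x).const_mul (2 : ℝ)
    simpa [hermiteD, hermite] using h
  | more k ih ih1 =>
    intro x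
    have hfun : hermite (k + 2) =
        fun y : ℝ => 2 * y * hermite (k + 1) y - 2 * ((k : ℝ) + 1) * hermite k y := by
      funext y; simp [hermite]
    rw [hfun]
    have h := (((hasDerivAt_id x).const_mul (2 : ℝ)).mul (ih1 x)).sub
      ((ih x).const_mul (2 * ((k : ℝ) + 1)))
    convert h using 1
    case e'_4 => rfl
    case e'_5 => rfl
    case e'_8 => rfl
    have hk := hermite_key k x
    have d1 : hermiteD (k + 1) x = 2 * ((k : ℝ) + 1) * hermite k x := rfl
    have d2 : hermiteD (k + 2) x = 2 * (((k : ℝ) + 1) + 1) * hermite (k + 1) x := by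
      show 2 * (((k + 1 : ℕ) : ℝ) + 1) * hermite (k + 1) x = _
      push_cast; ring
    rw [d2, d1, hk]
    simp only [id_eq]
    ring

/-- Polynomial version of `hermite`. -/
noncomputable def hermitePoly : ℕ → Polynomial ℝ
  | 0 => 1
  | 1 => Polynomial.C 2 * Polynomial.X
  | k + 2 => Polynomial.C 2 * Polynomial.X * hermitePoly (k + 1)
      - Polynomial.C (2 * ((k : ℝ) + 1)) * hermitePoly k

lemma hermitePoly_eval : ∀ (k : ℕ) (x : ℝ), (hermitePoly k).eval x = hermite k x := by
  intro k
  induction k using Nat.twoStepInduction with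
  | zero => intro x; simp [hermitePoly, hermite]
  | one => intro x; simp [hermitePoly, hermite]
  | more k ih ih1 =>
    intro x
    simp [hermitePoly, hermite, ih, ih1]

lemma integrable_gauss_poly (p : Polynomial ℝ) :
    Integrable fun y : ℝ => Real.exp (-y ^ 2) * p.eval y := by
  induction p using Polynomial.induction_on' with
  | add p q hp hq => simpa [mul_add, Pi.add_def] using hp.add hq
  | monomial k c =>
    have h : Integrable fun y : ℝ => y ^ (k : ℝ) * Real.exp (-1 * y ^ 2) :=
      integrable_rpow_mul_exp_neg_mul_sq one_pos
        (lt_of_lt_of_le neg_one_lt_zero (Nat.cast_nonneg k))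
    have h2 : Integrable fun y : ℝ => y ^ k * Real.exp (-y ^ 2) := by
      simpa [Real.rpow_natCast, neg_mul, one_mul] using h
    have heq : (fun y : ℝ => Real.exp (-y ^ 2) * (Polynomial.monomial k c).eval y)
        = fun y : ℝ => c * (y ^ k * Real.exp (-y ^ 2)) := by
      funext y; simp [Polynomial.eval_monomial]; ring
    rw [heq]
    exact h2.const_mul c

lemma tendsto_gauss_poly_atTop (q : Polynomial ℝ) :
    Tendsto (fun t : ℝ => Real.exp (-t ^ 2) * q.eval t) atTop (nhds 0) := by
  have h1 := q.tendsto_div_exp_atTop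
  have h3 : Tendsto (fun t : ℝ => t * (t - 1)) atTop atTop :=
    tendsto_id.atTop_mul_atTop₀ (tendsto_atTop_add_const_right _ (-1) tendsto_id)
  have h4 : Tendsto (fun t : ℝ => t - t ^ 2) atTop atBot := by
    have := tendsto_neg_atTop_atBot.comp h3
    refine this.congr fun t => ?_
    simp [Function.comp]; ring
  have h2 : Tendsto (fun t : ℝ => Real.exp (t - t ^ 2)) atTop (nhds 0) :=
    Real.tendsto_exp_atBot.comp h4
  have h5 := h1.mul h2
  rw [mul_zero] at h5
  refine h5.congr fun t => ?_
  rw [Real.exp_sub, Real.exp_neg]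
  field_simp

lemma tendsto_gauss_poly (p : Polynomial ℝ) :
    Tendsto (fun y : ℝ => Real.exp (-y ^ 2) * p.eval y) atBot (nhds 0) := by
  have h := (tendsto_gauss_poly_atTop (p.comp (-Polynomial.X))).comp tendsto_neg_atBot_atTop
  refine h.congr fun y => ?_
  simp [Function.comp, Polynomial.eval_comp]

theorem hermite_offdiag_integral (n m : ℕ) (hmn : m ≠ n) (x : ℝ) :
    (∫ y in Set.Iic x, Real.exp (-y ^ 2) * hermite n y * hermite m y) =
      Real.exp (-x ^ 2) *
        (hermite n x * hermite (m + 1) x - hermite m x * hermite (n + 1) x) /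
        (2 * ((m : ℝ) - n)) := by
  have hc : (2 : ℝ) * ((m : ℝ) - n) ≠ 0 :=
    mul_ne_zero two_ne_zero (sub_ne_zero.mpr (by exact_mod_cast hmn))
  have hderiv : ∀ y : ℝ,
      HasDerivAt (fun y : ℝ => Real.exp (-y ^ 2) *
          (hermite n y * hermite (m + 1) y - hermite m y * hermite (n + 1) y) /
          (2 * ((m : ℝ) - n)))
        (Real.exp (-y ^ 2) * hermite n y * hermite m y) y := by
    intro y
    have e1 : HasDerivAt (fun y : ℝ => Real.exp (-y ^ 2))
        (Real.exp (-y ^ 2) * (-(2 * y))) y := by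
      simpa using ((hasDerivAt_pow 2 y).neg).exp
    have e2 := ((hermite_hasDerivAt n y).mul (hermite_hasDerivAt (m + 1) y)).sub
      ((hermite_hasDerivAt m y).mul (hermite_hasDerivAt (n + 1) y))
    have e3 := (e1.mul e2).div_const (2 * ((m : ℝ) - n))
    convert e3 using 1
    case e'_4 => rfl
    case e'_5 => rfl
    case e'_8 => rfl
    rw [eq_div_iff hc]
    rw [hermite_key n y, hermite_key m y]
    have d1 : hermiteD (m + 1) y = 2 * ((m : ℝ) + 1) * hermite m y := rfl
    have d2 : hermiteD (n + 1) y = 2 * ((n : ℝ) + 1) * hermite n y := rfl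
    rw [d1, d2]
    simp only [Pi.sub_apply, Pi.mul_apply]
    ring
  have hint : IntegrableOn
      (fun y : ℝ => Real.exp (-y ^ 2) * hermite n y * hermite m y) (Set.Iic x) := by
    have h := integrable_gauss_poly (hermitePoly n * hermitePoly m)
    have heq : (fun y : ℝ => Real.exp (-y ^ 2) * (hermitePoly n * hermitePoly m).eval y)
        = fun y : ℝ => Real.exp (-y ^ 2) * hermite n y * hermite m y := by
      funext y; simp [hermitePoly_eval]; ring
    rw [heq] at h
    exact h.integrableOn
  have htend : Tendsto (fun y : ℝ => Real.exp (-y ^ 2) *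
      (hermite n y * hermite (m + 1) y - hermite m y * hermite (n + 1) y) /
      (2 * ((m : ℝ) - n))) atBot (nhds 0) := by
    have h := (tendsto_gauss_poly
      (hermitePoly n * hermitePoly (m + 1) - hermitePoly m * hermitePoly (n + 1))).div_const
      (2 * ((m : ℝ) - n))
    rw [zero_div] at h
    refine h.congr fun y => ?_
    simp [hermitePoly_eval]
  have key := integral_Iic_of_hasDerivAt_of_tendsto' (a := x)
    (fun y _ => hderiv y) hint htend
  rw [key, sub_zero]
end
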